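/- Let B(x_j, r_j) be a sequence of balls in ℝ^d with r_j → 0. Then the Lebesgue measure of {x : x ∈ B(x_j, r_j) for infinitely many j} equals the Lebesgue measure of ⋂_{0<c<1} {x : x ∈ B(x_j, c·r_j) for infinitely many j}. -/
import Mathlib


open MeasureTheory

/-- Shrinking the radii by any factor `c ∈ (0,1)` does not change the Lebesgue measure of the
limsup set of a sequence of balls with radii tending to `0`. -/
theorem limsup_balls_shrink {d : ℕ} (x : ℕ → EuclideanSpace ℝ (Fin d)) (r : ℕ → ℝ)
    (hr0 : Filter.Tendsto r Filter.atTop (nhds 0)) :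
    volume {y | {j | y ∈ Metric.closedBall (x j) (r j)}.Infinite} =
      volume (⋂ (c : ℝ) (_ : c ∈ Set.Ioo (0:ℝ) 1),
        {y | {j | y ∈ Metric.closedBall (x j) (c * r j)}.Infinite}) := by
  set μ := (volume : Measure (EuclideanSpace ℝ (Fin d)))
  set S : ℝ → Set (EuclideanSpace ℝ (Fin d)) :=
    fun c => {y | {j | y ∈ Metric.closedBall (x j) (c * r j)}.Infinite} with hSdef
  set p : ℕ → Prop := fun j => 0 ≤ r j with hpdef
  -- For every positive `c`, the limsup set with radii `c * r j` is exactly the blimsup of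
  -- closed thickenings over the indices with nonnegative radius.
  have key : ∀ c : ℝ, 0 < c →
      S c =
      (Filter.blimsup (fun j => Metric.cthickening (c * r j) {x j}) Filter.atTop p
        : Set (EuclideanSpace ℝ (Fin d))) := by
    intro c hc
    rw [← Nat.cofinite_eq_atTop, Filter.cofinite.blimsup_set_eq]
    ext y
    simp only [hSdef, Set.mem_setOf_eq]
    constructor
    · intro hy
      refine hy.mono fun j hj => ?_
      have hj' : dist y (x j) ≤ c * r j := hj
      have h0 : 0 ≤ c * r j := dist_nonneg.trans hj'
      have hrj : 0 ≤ r j := nonneg_of_mul_nonneg_right h0 hc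
      refine ⟨hrj, ?_⟩
      rw [Metric.cthickening_singleton _ (mul_nonneg hc.le hrj)]
      exact hj
    · intro hy
      refine hy.mono fun j hj => ?_
      obtain ⟨hrj, hj⟩ := hj
      rwa [Metric.cthickening_singleton _ (mul_nonneg hc.le hrj)] at hj
  -- hence `S c =ᵐ S 1` for every `0 < c`.
  have hc1 : ∀ c : ℝ, 0 < c → S c =ᵐ[μ] S 1 := by
    intro c hc
    rw [key c hc, key 1 one_pos]
    have h := blimsup_cthickening_mul_ae_eq μ p
      (fun j => ({x j} : Set (EuclideanSpace ℝ (Fin d)))) hc r hr0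
    simpa only [one_mul] using h
  -- monotonicity of `S`
  have hmono : ∀ {a b : ℝ}, 0 < a → a ≤ b → S a ⊆ S b := by
    intro a b ha hab y hy
    refine hy.mono fun j hj => ?_
    have hj' : dist y (x j) ≤ a * r j := hj
    have h0 : 0 ≤ a * r j := dist_nonneg.trans hj'
    have hrj : 0 ≤ r j := nonneg_of_mul_nonneg_right h0 ha
    exact le_trans hj' (mul_le_mul_of_nonneg_right hab hrj)
  -- reindex the intersection over a countable family
  have hInter : (⋂ (c : ℝ) (_ : c ∈ Set.Ioo (0:ℝ) 1), S c) = ⋂ n : ℕ, S (1 / (n + 2)) := by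
    apply Set.Subset.antisymm
    · refine Set.subset_iInter fun n => Set.biInter_subset_of_mem ?_
      constructor
      · positivity
      · rw [div_lt_one (by positivity)]
        have : (0:ℝ) ≤ (n : ℝ) := Nat.cast_nonneg n
        linarith
    · intro y hy
      simp only [Set.mem_iInter] at hy ⊢
      intro c hc
      obtain ⟨n, hn⟩ := exists_nat_gt (1 / c)
      have h2 : (1:ℝ) / c < (n : ℝ) + 2 := by linarith
      have hle : 1 / ((n : ℝ) + 2) ≤ c :=
        le_of_lt ((one_div_lt (by positivity) hc.1).mpr h2)
      exact hmono (by positivity) hle (hy n)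
  have hfinal : (⋂ n : ℕ, S (1 / ((n : ℝ) + 2))) =ᵐ[μ] S 1 := by
    have h := EventuallyEq.countable_iInter
      (l := ae μ) (s := fun n : ℕ => S (1 / ((n : ℝ) + 2))) (t := fun _ : ℕ => S 1)
      (fun n => hc1 _ (by positivity))
    simpa [Set.iInter_const] using h
  have hS1 : {y | {j | y ∈ Metric.closedBall (x j) (r j)}.Infinite} = S 1 := by
    simp [hSdef, one_mul]
  rw [hS1, hInter]
  exact (measure_congr hfinal).symm
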